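/- Let f : P → Q be an injective S-linear map between finitely generated projective S-modules whose cokernel is annihilated by ω, and let f_Σ : Q → P be the unique map with f ∘ f_Σ = ω·id_Q and f_Σ ∘ f = ω·id_P. Define i₁ = (id_P, f) : P → P ⊕ Q, i₀ = (f_Σ, id_Q) : Q → P ⊕ Q, π₁ = [−f, id_Q] : P ⊕ Q → Q and π₀ = [id_P, −f_Σ] : P ⊕ Q → P. Then the rows 0 → P →i₁→ P ⊕ Q →π₁→ Q → 0 and 0 → Q →i₀→ P ⊕ Q →π₀→ P → 0 are exact, the squares (ω·id_P ⊕ id_Q) ∘ i₁ = i₀ ∘ f and (−f_Σ) ∘ π₁ = π₀ ∘ (ω·id_P ⊕ id_Q) commute, and −f_Σ is injective with cokernel annihilated by ω. (The short exact sequence 0 → (P →f→ Q) → (P ⊕ Q →ω⊕id→ P ⊕ Q) → (Q →−f_Σ→ P) → 0 in Mon(ω, 𝒫), used in the proof of Theorem 3.2 of the paper to compute the cosyzygy Ω⁻¹(P →f→ Q) = (Q →−f_Σ→ P).) -/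

import Mathlib

lemma aux_smul_inj {S : Type*} [CommRing S] {ω : S} (hω : ω ∈ nonZeroDivisors S)
    {Q : Type*} [AddCommGroup Q] [Module S Q] [Module.Free S Q]
    {q : Q} (h : ω • q = 0) : q = 0 := by
  have b := Module.Free.chooseBasis S Q
  have : b.repr (ω • q) = 0 := by rw [h, map_zero]
  rw [map_smul] at this
  apply b.repr.injective
  ext i
  have h2 : (ω • b.repr q) i = 0 := by rw [this]; rfl
  rw [Finsupp.smul_apply, smul_eq_mul] at h2
  rw [mul_comm] at h2; simpa using hω.2 _ h2



/-- the short exact sequence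
`0 → (P →f→ Q) → (P ⊕ Q →ω⊕id→ P ⊕ Q) → (Q →−fSig→ P) → 0` in `Mon(ω, 𝒫)`,
used in the proof of Theorem 3.2 to compute `Ω⁻¹(P →f→ Q) = (Q →−fSig→ P)`.
Let `f : P → Q` be an injective map of finitely generated projective
`S`-modules with cokernel annihilated by `ω`, and `fSig : Q → P` the unique
map with `f ∘ fSig = ω·id_Q`, `fSig ∘ f = ω·id_P`.  With
`i₁ = (id_P, f)`, `i₀ = (fSig, id_Q)`, `π₁ = [−f, id_Q]`, `π₀ = [id_P, −fSig]`,
the rows `0 → P →i₁→ P ⊕ Q →π₁→ Q → 0` and `0 → Q →i₀→ P ⊕ Q →π₀→ P → 0` are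
exact, the squares `(ω·id_P ⊕ id_Q) ∘ i₁ = i₀ ∘ f` and
`(−fSig) ∘ π₁ = π₀ ∘ (ω·id_P ⊕ id_Q)` commute, and `−fSig` is injective with
cokernel annihilated by `ω`. -/
theorem stmt_12
    {S : Type*} [CommRing S] [IsNoetherianRing S] [IsLocalRing S]
    (ω : S) (hω_mem : ω ∈ IsLocalRing.maximalIdeal S) (hω : ω ∈ nonZeroDivisors S)
    {P Q : Type*}
    [AddCommGroup P] [Module S P] [Module.Finite S P] [Module.Projective S P]
    [AddCommGroup Q] [Module S Q] [Module.Finite S Q] [Module.Projective S Q]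
    (f : P →ₗ[S] Q) (hf : Function.Injective f)
    (hcoker : ∀ q : Q, ω • q ∈ LinearMap.range f)
    (fSig : Q →ₗ[S] P)
    (hfSig1 : f.comp fSig = ω • (LinearMap.id : Q →ₗ[S] Q))
    (hfSig2 : fSig.comp f = ω • (LinearMap.id : P →ₗ[S] P)) :
    -- exactness of the first row
    Function.Injective ((LinearMap.id : P →ₗ[S] P).prod f) ∧
    LinearMap.range ((LinearMap.id : P →ₗ[S] P).prod f) =
      LinearMap.ker ((-f).coprod (LinearMap.id : Q →ₗ[S] Q)) ∧
    Function.Surjective ((-f).coprod (LinearMap.id : Q →ₗ[S] Q)) ∧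
    -- exactness of the second row
    Function.Injective (fSig.prod (LinearMap.id : Q →ₗ[S] Q)) ∧
    LinearMap.range (fSig.prod (LinearMap.id : Q →ₗ[S] Q)) =
      LinearMap.ker ((LinearMap.id : P →ₗ[S] P).coprod (-fSig)) ∧
    Function.Surjective ((LinearMap.id : P →ₗ[S] P).coprod (-fSig)) ∧
    -- commutativity of the two squares
    (LinearMap.prodMap (ω • (LinearMap.id : P →ₗ[S] P))
        (LinearMap.id : Q →ₗ[S] Q)).comp
      ((LinearMap.id : P →ₗ[S] P).prod f) =
      (fSig.prod (LinearMap.id : Q →ₗ[S] Q)).comp f ∧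
    (-fSig).comp ((-f).coprod (LinearMap.id : Q →ₗ[S] Q)) =
      ((LinearMap.id : P →ₗ[S] P).coprod (-fSig)).comp
        (LinearMap.prodMap (ω • (LinearMap.id : P →ₗ[S] P))
          (LinearMap.id : Q →ₗ[S] Q)) ∧
    -- `−fSig` is a monomorphism with cokernel annihilated by `ω`
    Function.Injective (-fSig) ∧
    (∀ p : P, ω • p ∈ LinearMap.range (-fSig)) := by
  have hfS1 : ∀ q, f (fSig q) = ω • q := fun q => LinearMap.congr_fun hfSig1 q
  have hfS2 : ∀ p, fSig (f p) = ω • p := fun p => LinearMap.congr_fun hfSig2 p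
  have : Module.FinitePresentation S Q := Module.finitePresentation_of_finite S Q
  have hQfree : Module.Free S Q := Module.free_of_flat_of_isLocalRing
  refine ⟨?_, ?_, ?_, ?_, ?_, ?_, ?_, ?_, ?_, ?_⟩
  · intro a b h
    simpa using congrArg Prod.fst h
  · ext ⟨p, q⟩
    simp only [LinearMap.mem_range, LinearMap.mem_ker, LinearMap.coprod_apply,
      LinearMap.prod_apply, LinearMap.neg_apply, LinearMap.id_coe, id_eq, Function.prod, Prod.mk.injEq]
    constructor
    · rintro ⟨x, rfl, rfl⟩; simp
    · intro h
      exact ⟨p, rfl, neg_add_eq_zero.mp h⟩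
  · intro q; exact ⟨(0, q), by simp⟩
  · intro a b h
    simpa using congrArg Prod.snd h
  · ext ⟨p, q⟩
    simp only [LinearMap.mem_range, LinearMap.mem_ker, LinearMap.coprod_apply,
      LinearMap.prod_apply, LinearMap.neg_apply, LinearMap.id_coe, id_eq, Function.prod, Prod.mk.injEq]
    constructor
    · rintro ⟨x, rfl, rfl⟩; simp
    · intro h
      exact ⟨q, (add_neg_eq_zero.mp h).symm, rfl⟩
  · intro p; exact ⟨(p, 0), by simp⟩
  · ext p
    · simp [hfS2]
    · simp
  · refine LinearMap.ext fun x => ?_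
    obtain ⟨p, q⟩ := x
    simp [hfS2]
    module
  · intro a b h
    simp only [LinearMap.neg_apply, neg_inj] at h
    have h1 : ω • a = ω • b := by rw [← hfS1, ← hfS1, h]
    have h2 : ω • (a - b) = 0 := by rw [smul_sub, h1, sub_self]
    have := aux_smul_inj hω h2
    exact sub_eq_zero.mp this
  · intro p
    exact ⟨-(f p), by simp [hfS2]⟩
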